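/- The function f_X(x) = (1/π)√(1/x − 1/4) on (0,4] is a probability density function, i.e., it is nonnegative on (0,4] and its integral over (0,4] equals 1. -/

import Mathlib

open Real MeasureTheory

/-- Quarter circle law eigenvalue density. -/
noncomputable def fX (x : ℝ) : ℝ :=
  if 0 < x ∧ x ≤ 4 then (1 / π) * Real.sqrt (1 / x - 1 / 4) else 0

/-- Antiderivative of the quarter circle density (up to the 1/π factor). -/
noncomputable def qcF (x : ℝ) : ℝ :=
  2 * Real.arcsin (Real.sqrt x / 2) + Real.sqrt (x * (4 - x)) / 2

lemma qcF_deriv {x : ℝ} (hx : x ∈ Set.Ioo (0:ℝ) 4) :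
    HasDerivAt qcF (Real.sqrt (1 / x - 1 / 4)) x := by
  obtain ⟨h0, h4⟩ := hx
  have hxne : x ≠ 0 := ne_of_gt h0
  have ha : (0:ℝ) < Real.sqrt x := Real.sqrt_pos.mpr h0
  have hb : (0:ℝ) < Real.sqrt (4 - x) := Real.sqrt_pos.mpr (by linarith)
  have hsq : Real.sqrt x ^ 2 = x := Real.sq_sqrt h0.le
  have hbq : Real.sqrt (4 - x) ^ 2 = 4 - x := Real.sq_sqrt (by linarith)
  have hlt2 : Real.sqrt x < 2 := by nlinarith
  have h1 : HasDerivAt (fun y => Real.sqrt y / 2) (1 / (2 * Real.sqrt x) / 2) x :=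
    (Real.hasDerivAt_sqrt hxne).div_const 2
  have harc : HasDerivAt (fun y => Real.arcsin (Real.sqrt y / 2))
      (1 / Real.sqrt (1 - (Real.sqrt x / 2) ^ 2) * (1 / (2 * Real.sqrt x) / 2)) x :=
    (Real.hasDerivAt_arcsin (ne_of_gt (by linarith)) (ne_of_lt (by linarith))).comp x h1
  have hg : HasDerivAt (fun y : ℝ => y * (4 - y)) (4 - 2 * x) x := by
    have := (hasDerivAt_id x).mul ((hasDerivAt_const x (4:ℝ)).sub (hasDerivAt_id x))
    refine this.congr_deriv (Eq.symm ?_)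
    simp only [id_eq, Pi.sub_apply]; ring
  have hgx : x * (4 - x) ≠ 0 := ne_of_gt (by nlinarith)
  have hsg : HasDerivAt (fun y => Real.sqrt (y * (4 - y)) / 2)
      (1 / (2 * Real.sqrt (x * (4 - x))) * (4 - 2 * x) / 2) x :=
    (((Real.hasDerivAt_sqrt hgx).comp x hg)).div_const 2
  have := (harc.const_mul 2).add hsg
  refine this.congr_deriv (Eq.symm ?_)
  have e1 : Real.sqrt (1 - (Real.sqrt x / 2) ^ 2) = Real.sqrt (4 - x) / 2 := by
    rw [div_pow, hsq, show (1 : ℝ) - x / 2 ^ 2 = (4 - x) / 4 by ring,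
      show ((4:ℝ) - x)/4 = (Real.sqrt (4-x)/2)^2 by rw [div_pow]; rw [hbq]; norm_num,
      Real.sqrt_sq (by positivity)]
  have e2 : Real.sqrt (x * (4 - x)) = Real.sqrt x * Real.sqrt (4 - x) :=
    Real.sqrt_mul h0.le _
  have e3 : Real.sqrt (1 / x - 1 / 4) = Real.sqrt (4 - x) / (2 * Real.sqrt x) := by
    rw [show (1:ℝ)/x - 1/4 = (4 - x)/(2 * Real.sqrt x)^2 by
        rw [mul_pow, hsq, eq_div_iff (by positivity), sub_mul]; field_simp; ring,
      Real.sqrt_div (by linarith), Real.sqrt_sq (by positivity)]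
  rw [e1, e2, e3]
  field_simp
  linear_combination 2 * hbq

lemma qcF_cont : ContinuousOn qcF (Set.Icc (0:ℝ) 4) := by
  apply Continuous.continuousOn
  exact (continuous_const.mul
      (Real.continuous_arcsin.comp (Real.continuous_sqrt.div_const 2))).add
    ((Real.continuous_sqrt.comp
      (continuous_id.mul (continuous_const.sub continuous_id))).div_const 2)

lemma qc_integrable :
    IntervalIntegrable (fun x => Real.sqrt (1 / x - 1 / 4)) volume 0 4 := by
  rw [intervalIntegrable_iff_integrableOn_Ioc_of_le (by norm_num)]
  have hg : IntegrableOn (fun x : ℝ => x ^ (-(1/2) : ℝ)) (Set.Ioc (0:ℝ) 4) volume := by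
    have := intervalIntegral.intervalIntegrable_rpow' (a := 0) (b := 4)
      (r := -(1/2)) (by norm_num)
    rw [intervalIntegrable_iff_integrableOn_Ioc_of_le (by norm_num)] at this
    exact this
  apply hg.mono'
  · exact ((Real.continuous_sqrt.measurable).comp
      ((measurable_const.div measurable_id).sub measurable_const)).aestronglyMeasurable
  filter_upwards [ae_restrict_mem measurableSet_Ioc] with x hx
  obtain ⟨h0, h4⟩ := hx
  rw [Real.norm_eq_abs, abs_of_nonneg (Real.sqrt_nonneg _)]
  calc Real.sqrt (1 / x - 1 / 4) ≤ Real.sqrt (1 / x) :=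
        Real.sqrt_le_sqrt (by linarith)
    _ = x ^ (-(1/2) : ℝ) := by
        rw [one_div, Real.sqrt_inv, Real.sqrt_eq_rpow, ← Real.rpow_neg h0.le]

lemma qc_integral : ∫ x in (0:ℝ)..4, Real.sqrt (1 / x - 1 / 4) = π := by
  rw [intervalIntegral.integral_eq_sub_of_hasDeriv_right_of_le (by norm_num) qcF_cont
    (fun x hx => (qcF_deriv hx).hasDerivWithinAt) qc_integrable]
  have h4 : Real.sqrt 4 = 2 := by
    rw [show (4:ℝ) = 2 ^ 2 by norm_num, Real.sqrt_sq (by norm_num)]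
  simp [qcF, h4, Real.arcsin_one]
  ring

theorem quarter_circle_density_is_pdf :
    (∀ x ∈ Set.Ioc (0 : ℝ) 4, 0 ≤ fX x) ∧
    ∫ x in Set.Ioc (0 : ℝ) 4, fX x = 1 := by
  constructor
  · intro x hx
    rw [fX, if_pos ⟨hx.1, hx.2⟩]
    positivity
  · have hEq : Set.EqOn fX (fun x => (1 / π) * Real.sqrt (1 / x - 1 / 4))
        (Set.Ioc (0:ℝ) 4) := fun x hx => by rw [fX, if_pos ⟨hx.1, hx.2⟩]
    rw [setIntegral_congr_fun measurableSet_Ioc hEq,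
      ← intervalIntegral.integral_of_le (by norm_num : (0:ℝ) ≤ 4),
      intervalIntegral.integral_const_mul, qc_integral]
    field_simp
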